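/- Let 0 < ε < 1/3, δ ∈ (0,1/7], n = O(d log d), and ŵ ∈ Δ_{n,ε} satisfying ‖μ_ŵ − μ‖₂ ≤ C_{CDG1}(r_o + r_d′). Then, on the high-probability event of the sparse-inner-product bound (probability at least 1 − δ), for every β_η with δ_{β_η} = β_η − β*: |Σ_{i∈I_o} ŵ_i h(r_i(β_η)) (x_i − μ_ŵ)^⊤ δ_{β_η}| ≤ C_{2δ} (r_o + r_d) ‖δ_{β_η}‖₂, where C_{2δ} = 2C_{CDG1} + 2C_τ(2 + √(log(1/δ))). -/
import Mathlib


open MeasureTheory ProbabilityTheory Finset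
open scoped RealInnerProductSpace BigOperators ENNReal

noncomputable section

/-- The Huber loss function `H`. -/
def huberLoss (t : ℝ) : ℝ := if |t| ≤ 1 then t ^ 2 / 2 else |t| - 1 / 2

/-- The derivative `h` of the Huber loss. -/
def hub (t : ℝ) : ℝ := if |t| ≤ 1 then t else Real.sign t

/-- The weight simplex `Δ_{n,ε}`. -/
def weightSet (n : ℕ) (ε : ℝ) : Set (Fin n → ℝ) :=
  {w | ∑ i, w i = 1 ∧ ∀ i, 0 ≤ w i ∧ w i ≤ 1 / ((1 - ε) * n)}

/-- The rank-one operator `u u^⊤`. -/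
def outerProd {d : ℕ} (u : EuclideanSpace ℝ (Fin d)) :
    EuclideanSpace ℝ (Fin d) →L[ℝ] EuclideanSpace ℝ (Fin d) :=
  ((innerSL ℝ) u).smulRight u

lemma abs_hub_le_one (t : ℝ) : |hub t| ≤ 1 := by
  unfold hub
  split_ifs with h
  · exact h
  · rcases lt_trichotomy t 0 with h1 | h1 | h1
    · simp [Real.sign_of_neg h1]
    · simp [h1, Real.sign_zero]
    · simp [Real.sign_of_pos h1]

set_option maxHeartbeats 1000000 in
/-- Confirmation of condition (2) on the good event
(Proposition 4.10 of the paper). -/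
theorem conf_cond2_subGaussian
    {n d : ℕ} {ε lamo δ Cτ C1 : ℝ}
    (hε0 : 0 < ε) (hε : ε < 1 / 3) (hlamo : 0 < lamo)
    (hδ0 : 0 < δ) (hδ : δ ≤ 1 / 7)
    (hCτ : 0 < Cτ) (hC1 : 0 < C1)
    (ro rd rd' : ℝ)
    (hro : ro = ε * Real.sqrt (Real.log (1 / ε)))
    (hrd : rd = Real.sqrt ((d : ℝ) * Real.log d / n))
    (hrd' : rd' = Real.sqrt ((d : ℝ) / n))
    -- `n` is large, of order `d log d`
    (hd : 1 ≤ (d : ℝ) * Real.log d) (hro1 : ro ≤ 1) (hrd1 : rd ≤ 1)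
    (w y : Fin n → ℝ) (hw : w ∈ weightSet n ε)
    (x : Fin n → EuclideanSpace ℝ (Fin d))
    (Io : Finset (Fin n)) (hIo : (Io.card : ℝ) ≤ ε * n)
    (μ μw : EuclideanSpace ℝ (Fin d))
    (hμw : ‖μw - μ‖ ≤ C1 * (ro + rd'))
    -- the sparse-inner-product bound
    (hsparse : ∀ m : ℕ, 1 ≤ m → (m : ℝ) ≤ 3 * (ε * n) →
      ∀ I : Finset (Fin n), I.card = m →
      ∀ (u : Fin n → ℝ) (v : EuclideanSpace ℝ (Fin d)),
        |∑ i ∈ I, u i * ⟪x i - μ, v⟫| ≤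
          Cτ * Real.sqrt (∑ i ∈ I, u i ^ 2) * ‖v‖ *
            ((1 + Real.sqrt (Real.log (1 / δ))) + Real.sqrt ((d : ℝ) * Real.log d) +
              Real.sqrt (m * Real.log ((n : ℝ) / m)))) :
    ∀ βstar βη : EuclideanSpace ℝ (Fin d),
      |∑ i ∈ Io, w i *
          hub ((y i - n * w i * ⟪x i - μw, βη⟫) / (lamo * Real.sqrt n)) *
          ⟪x i - μw, βη - βstar⟫| ≤
        (2 * C1 + 2 * Cτ * (2 + Real.sqrt (Real.log (1 / δ)))) *
          (ro + rd) * ‖βη - βstar‖ := by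
  intro βstar βη
  set v := βη - βstar with hv
  set L := Real.sqrt (Real.log (1 / δ)) with hLdef
  have hL0 : 0 ≤ L := Real.sqrt_nonneg _
  have hro0 : 0 ≤ ro := by
    rw [hro]; positivity
  have hrd0 : 0 ≤ rd := by rw [hrd]; exact Real.sqrt_nonneg _
  have hrd'0 : 0 ≤ rd' := by rw [hrd']; exact Real.sqrt_nonneg _
  rcases Io.eq_empty_or_nonempty with hIoe | hIone
  · rw [hIoe]
    simp only [Finset.sum_empty, abs_zero]
    have hc : (0:ℝ) ≤ 2 * C1 + 2 * Cτ * (2 + L) := by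
      have h1 : 0 ≤ Cτ * (2 + L) := mul_nonneg hCτ.le (by linarith)
      linarith
    exact mul_nonneg (mul_nonneg hc (by linarith)) (norm_nonneg _)
  obtain ⟨i0, hi0⟩ := hIone
  have hn : 0 < n := i0.pos
  have hn' : (0:ℝ) < n := by exact_mod_cast hn
  have hε1 : (0:ℝ) < 1 - ε := by linarith
  simp only [weightSet, Set.mem_setOf_eq] at hw
  obtain ⟨hwsum, hwb⟩ := hw
  set W : ℝ := 1 / ((1 - ε) * n) with hWdef
  have hW0 : 0 < W := by positivity
  set m := Io.card with hmdef
  have hm1 : 1 ≤ m := Finset.card_pos.mpr ⟨i0, hi0⟩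
  have hmR : (1:ℝ) ≤ (m:ℝ) := by exact_mod_cast hm1
  have hm0 : (0:ℝ) < m := by linarith
  have hεn1 : (1:ℝ) ≤ ε * n := le_trans hmR hIo
  -- log(1/ε) ≥ 1
  have hεinv : (3:ℝ) ≤ 1 / ε := by rw [le_div_iff₀ hε0]; linarith
  have hεinv0 : (0:ℝ) < 1 / ε := by positivity
  have hlogε : (1:ℝ) ≤ Real.log (1 / ε) := by
    rw [Real.le_log_iff_exp_le hεinv0]
    linarith [Real.exp_one_lt_d9]
  have hlogε0 : (0:ℝ) ≤ Real.log (1 / ε) := by linarith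
  -- basic algebra with W
  have hWeq : W * ((1 - ε) * n) = 1 := by
    rw [hWdef]; field_simp
  have hεsq : ε ≤ (1 - ε) ^ 2 := by nlinarith [sq_nonneg ε, hε0, hε]
  have hmW2 : (m:ℝ) * W ^ 2 ≤ 1 / n := by
    rw [le_div_iff₀ hn']
    have hWn : (0:ℝ) ≤ W ^ 2 * n := by positivity
    calc (m:ℝ) * W ^ 2 * n ≤ (ε * n) * W ^ 2 * n := by
          have := mul_le_mul_of_nonneg_right hIo hWn
          linarith [this]
      _ ≤ ((1 - ε) ^ 2 * n) * W ^ 2 * n := by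
          have h1 : ε * n ≤ (1 - ε) ^ 2 * n :=
            mul_le_mul_of_nonneg_right hεsq hn'.le
          have := mul_le_mul_of_nonneg_right h1 hWn
          linarith [this]
      _ = (W * ((1 - ε) * n)) ^ 2 := by ring
      _ = 1 := by rw [hWeq]; norm_num
  have hmW2' : (m:ℝ) * W ^ 2 ≤ (9/4) * ε / n := by
    rw [le_div_iff₀ hn']
    have h2 : ε * n * W ^ 2 * n * (1 - ε) ^ 2 = ε := by
      calc ε * n * W ^ 2 * n * (1 - ε) ^ 2 = ε * (W * ((1 - ε) * n)) ^ 2 := by ring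
        _ = ε := by rw [hWeq]; ring
    have hWn : (0:ℝ) ≤ W ^ 2 * n := by positivity
    have h1 : (m:ℝ) * W ^ 2 * n ≤ ε * n * W ^ 2 * n := by
      have := mul_le_mul_of_nonneg_right hIo hWn
      linarith [this]
    have hX : (0:ℝ) ≤ ε * n * W ^ 2 * n := by positivity
    have h49 : (4/9:ℝ) ≤ (1 - ε) ^ 2 := by nlinarith [sq_nonneg ε, hε0, hε]
    have h3 := mul_le_mul_of_nonneg_left h49 hX
    linarith [h1, h2, h3]
  have hmW : (m:ℝ) * W ≤ 1 / 2 := by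
    have h1 : (m:ℝ) * W ≤ ε * n * W := mul_le_mul_of_nonneg_right hIo hW0.le
    have h2 : ε * n * W * (1 - ε) = ε := by
      calc ε * n * W * (1 - ε) = ε * (W * ((1 - ε) * n)) := by ring
        _ = ε := by rw [hWeq]; ring
    have hY : (0:ℝ) ≤ ε * n * W := by positivity
    have h3 := mul_le_mul_of_nonneg_left (show (2/3:ℝ) ≤ 1 - ε by linarith) hY
    linarith [h1, h2, h3]
  -- d ≥ 2 and rd' ≤ 2 rd
  have hd2 : (2:ℝ) ≤ d := by
    by_contra hcon
    push_neg at hcon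
    have hdn : d < 2 := by exact_mod_cast hcon
    have hd01 : d = 0 ∨ d = 1 := by omega
    rcases hd01 with h | h <;> rw [h] at hd <;>
      norm_num [Real.log_one, Real.log_zero] at hd
  have hlog2 : (1/4:ℝ) ≤ Real.log 2 := by linarith [Real.log_two_gt_d9]
  have hlogd : (1/4:ℝ) ≤ Real.log d :=
    le_trans hlog2 (Real.log_le_log (by norm_num) hd2)
  have hrd2 : rd' ≤ 2 * rd := by
    rw [hrd', hrd]
    have h4 : (d:ℝ) / n ≤ 4 * ((d:ℝ) * Real.log d / n) := by
      rw [div_le_iff₀ hn']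
      have : (d:ℝ) ≤ 4 * ((d:ℝ) * Real.log d) := by
        have h5 := mul_le_mul_of_nonneg_left hlogd (by linarith : (0:ℝ) ≤ (d:ℝ))
        linarith [h5]
      calc (d:ℝ) ≤ 4 * ((d:ℝ) * Real.log d) := this
        _ = 4 * ((d:ℝ) * Real.log d / n) * n := by field_simp
    calc Real.sqrt ((d:ℝ) / n) ≤ Real.sqrt (4 * ((d:ℝ) * Real.log d / n)) :=
          Real.sqrt_le_sqrt h4
      _ = 2 * Real.sqrt ((d:ℝ) * Real.log d / n) := by
          rw [show (4:ℝ) = 2 ^ 2 by norm_num, Real.sqrt_mul (by positivity),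
            Real.sqrt_sq (by norm_num)]
  -- sqrt product bounds
  have hQ1 : Real.sqrt ((m:ℝ) * W ^ 2) ≤ rd := by
    rw [hrd]
    apply Real.sqrt_le_sqrt
    calc (m:ℝ) * W ^ 2 ≤ 1 / n := hmW2
      _ ≤ (d:ℝ) * Real.log d / n := by gcongr
  have hQD : Real.sqrt ((m:ℝ) * W ^ 2) * Real.sqrt ((d:ℝ) * Real.log d) ≤ rd := by
    rw [hrd, ← Real.sqrt_mul (by positivity)]
    apply Real.sqrt_le_sqrt
    have h0 : (0:ℝ) ≤ (d:ℝ) * Real.log d := by linarith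
    calc (m:ℝ) * W ^ 2 * ((d:ℝ) * Real.log d) ≤ (1 / n) * ((d:ℝ) * Real.log d) :=
          mul_le_mul_of_nonneg_right hmW2 h0
      _ = (d:ℝ) * Real.log d / n := by ring
  -- m log(n/m) ≤ ε n log(1/ε)
  have hεnm0 : (0:ℝ) < ε * n / m := by positivity
  have hlogsplit : Real.log ((n:ℝ) / m) = Real.log (1 / ε) + Real.log (ε * n / m) := by
    rw [← Real.log_mul (by positivity) (by positivity)]
    congr 1
    field_simp
  have hM : (m:ℝ) * Real.log ((n:ℝ) / m) ≤ ε * n * Real.log (1 / ε) := by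
    have h2 : Real.log (ε * n / m) ≤ ε * n / m - 1 := Real.log_le_sub_one_of_pos hεnm0
    have h3 : (m:ℝ) * (ε * n / m) = ε * n := by field_simp
    rw [hlogsplit]
    have h4 : (m:ℝ) * Real.log (ε * n / m) ≤ ε * n - m := by
      have h6 := mul_le_mul_of_nonneg_left h2 hm0.le
      have h7 : (m:ℝ) * (ε * n / m - 1) = ε * n - m := by
        rw [mul_sub, h3]; ring
      linarith [h6, h7]
    have h5 : (ε * n - m) * 1 ≤ (ε * n - m) * Real.log (1 / ε) :=
      mul_le_mul_of_nonneg_left hlogε (by linarith)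
    linarith [h4, h5]
  have hM0 : (0:ℝ) ≤ (m:ℝ) * Real.log ((n:ℝ) / m) := by
    have hmn : (m:ℝ) ≤ n := by
      have := mul_nonneg hε1.le hn'.le
      nlinarith [hIo, this]
    have h1 : (1:ℝ) ≤ (n:ℝ) / m := by rw [le_div_iff₀ hm0]; linarith
    exact mul_nonneg hm0.le (Real.log_nonneg h1)
  have hQM : Real.sqrt ((m:ℝ) * W ^ 2) * Real.sqrt ((m:ℝ) * Real.log ((n:ℝ) / m))
      ≤ (3/2) * ro := by
    rw [← Real.sqrt_mul (by positivity)]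
    have hro2 : ((3/2) * ro) ^ 2 = (9/4) * (ε ^ 2 * Real.log (1 / ε)) := by
      rw [hro, mul_pow, mul_pow, Real.sq_sqrt hlogε0]; ring
    have hb : (m:ℝ) * W ^ 2 * ((m:ℝ) * Real.log ((n:ℝ) / m)) ≤ ((3/2) * ro) ^ 2 := by
      rw [hro2]
      calc (m:ℝ) * W ^ 2 * ((m:ℝ) * Real.log ((n:ℝ) / m))
          ≤ ((9/4) * ε / n) * (ε * n * Real.log (1 / ε)) :=
            mul_le_mul hmW2' hM hM0 (by positivity)
        _ = (9/4) * (ε ^ 2 * Real.log (1 / ε)) * (n / n) := by ring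
        _ = (9/4) * (ε ^ 2 * Real.log (1 / ε)) := by rw [div_self hn'.ne']; ring
    calc Real.sqrt ((m:ℝ) * W ^ 2 * ((m:ℝ) * Real.log ((n:ℝ) / m)))
        ≤ Real.sqrt (((3/2) * ro) ^ 2) := Real.sqrt_le_sqrt hb
      _ = (3/2) * ro := Real.sqrt_sq (by linarith)
  -- main bound for abstract weights u with |u i| ≤ W
  have main : ∀ u : Fin n → ℝ, (∀ i, |u i| ≤ W) →
      |∑ i ∈ Io, u i * ⟪x i - μw, v⟫| ≤
        (2 * C1 + 2 * Cτ * (2 + L)) * (ro + rd) * ‖v‖ := by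
    intro u hu
    have hsum : ∑ i ∈ Io, u i * ⟪x i - μw, v⟫
        = (∑ i ∈ Io, u i * ⟪x i - μ, v⟫) + ∑ i ∈ Io, u i * ⟪μ - μw, v⟫ := by
      rw [← Finset.sum_add_distrib]
      refine Finset.sum_congr rfl fun i _ => ?_
      have hx : x i - μw = (x i - μ) + (μ - μw) := by abel
      rw [hx, inner_add_left, mul_add]
    have hB : |∑ i ∈ Io, u i * ⟪μ - μw, v⟫| ≤ (m:ℝ) * W * (C1 * (ro + rd') * ‖v‖) := by
      calc |∑ i ∈ Io, u i * ⟪μ - μw, v⟫| ≤ ∑ i ∈ Io, |u i * ⟪μ - μw, v⟫| :=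
            Finset.abs_sum_le_sum_abs _ _
        _ ≤ ∑ i ∈ Io, W * (C1 * (ro + rd') * ‖v‖) := by
            refine Finset.sum_le_sum fun i _ => ?_
            rw [abs_mul]
            have hi1 : |(⟪μ - μw, v⟫ : ℝ)| ≤ C1 * (ro + rd') * ‖v‖ := by
              calc |(⟪μ - μw, v⟫ : ℝ)| ≤ ‖μ - μw‖ * ‖v‖ := abs_real_inner_le_norm _ _
                _ ≤ C1 * (ro + rd') * ‖v‖ := by
                    rw [norm_sub_rev]
                    exact mul_le_mul_of_nonneg_right hμw (norm_nonneg _)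
            exact mul_le_mul (hu i) hi1 (abs_nonneg _) hW0.le
        _ = (m:ℝ) * (W * (C1 * (ro + rd') * ‖v‖)) := by
            rw [Finset.sum_const, nsmul_eq_mul]
        _ = (m:ℝ) * W * (C1 * (ro + rd') * ‖v‖) := by ring
    have hA := hsparse m hm1 (by linarith [hIo, hεn1]) Io rfl u v
    have hS : Real.sqrt (∑ i ∈ Io, u i ^ 2) ≤ Real.sqrt ((m:ℝ) * W ^ 2) := by
      apply Real.sqrt_le_sqrt
      calc ∑ i ∈ Io, u i ^ 2 ≤ ∑ i ∈ Io, W ^ 2 := by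
            refine Finset.sum_le_sum fun i _ => ?_
            calc u i ^ 2 = |u i| ^ 2 := (sq_abs _).symm
              _ ≤ W ^ 2 := pow_le_pow_left₀ (abs_nonneg _) (hu i) 2
        _ = (m:ℝ) * W ^ 2 := by rw [Finset.sum_const, nsmul_eq_mul]
    have hT0 : (0:ℝ) ≤ (1 + L) + Real.sqrt ((d:ℝ) * Real.log d) +
        Real.sqrt ((m:ℝ) * Real.log ((n:ℝ) / m)) := by positivity
    have hA2 : |∑ i ∈ Io, u i * ⟪x i - μ, v⟫| ≤
        Cτ * Real.sqrt ((m:ℝ) * W ^ 2) * ‖v‖ *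
          ((1 + L) + Real.sqrt ((d:ℝ) * Real.log d) +
            Real.sqrt ((m:ℝ) * Real.log ((n:ℝ) / m))) := by
      refine le_trans hA ?_
      exact mul_le_mul_of_nonneg_right
        (mul_le_mul_of_nonneg_right (mul_le_mul_of_nonneg_left hS hCτ.le) (norm_nonneg _)) hT0
    have hQT : Real.sqrt ((m:ℝ) * W ^ 2) * ((1 + L) + Real.sqrt ((d:ℝ) * Real.log d) +
        Real.sqrt ((m:ℝ) * Real.log ((n:ℝ) / m))) ≤ (2 + L) * rd + (3/2) * ro := by
      have e1 : Real.sqrt ((m:ℝ) * W ^ 2) * (1 + L) ≤ rd * (1 + L) :=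
        mul_le_mul_of_nonneg_right hQ1 (by linarith)
      calc Real.sqrt ((m:ℝ) * W ^ 2) * ((1 + L) + Real.sqrt ((d:ℝ) * Real.log d) +
            Real.sqrt ((m:ℝ) * Real.log ((n:ℝ) / m)))
          = Real.sqrt ((m:ℝ) * W ^ 2) * (1 + L) +
              Real.sqrt ((m:ℝ) * W ^ 2) * Real.sqrt ((d:ℝ) * Real.log d) +
              Real.sqrt ((m:ℝ) * W ^ 2) * Real.sqrt ((m:ℝ) * Real.log ((n:ℝ) / m)) := by
            ring
        _ ≤ rd * (1 + L) + rd + (3/2) * ro := add_le_add (add_le_add e1 hQD) hQM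
        _ = (2 + L) * rd + (3/2) * ro := by ring
    have hA3 : |∑ i ∈ Io, u i * ⟪x i - μ, v⟫| ≤
        Cτ * ((2 + L) * rd + (3/2) * ro) * ‖v‖ := by
      refine le_trans hA2 ?_
      have heq : Cτ * Real.sqrt ((m:ℝ) * W ^ 2) * ‖v‖ *
          ((1 + L) + Real.sqrt ((d:ℝ) * Real.log d) +
            Real.sqrt ((m:ℝ) * Real.log ((n:ℝ) / m)))
          = Cτ * (Real.sqrt ((m:ℝ) * W ^ 2) *
              ((1 + L) + Real.sqrt ((d:ℝ) * Real.log d) +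
                Real.sqrt ((m:ℝ) * Real.log ((n:ℝ) / m)))) * ‖v‖ := by ring
      rw [heq]
      exact mul_le_mul_of_nonneg_right (mul_le_mul_of_nonneg_left hQT hCτ.le) (norm_nonneg _)
    have key : Cτ * ((2 + L) * rd + (3/2) * ro) + (m:ℝ) * W * (C1 * (ro + rd'))
        ≤ (2 * C1 + 2 * Cτ * (2 + L)) * (ro + rd) := by
      have h0 : 0 ≤ C1 * (ro + rd') := by positivity
      have h1 : (m:ℝ) * W * (C1 * (ro + rd')) ≤ (1/2) * (C1 * (ro + 2 * rd)) := by
        calc (m:ℝ) * W * (C1 * (ro + rd')) ≤ (1/2) * (C1 * (ro + rd')) :=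
              mul_le_mul_of_nonneg_right hmW h0
          _ ≤ (1/2) * (C1 * (ro + 2 * rd)) := by
              have h2 := mul_le_mul_of_nonneg_left hrd2 hC1.le
              linarith [h2]
      linarith [h1, mul_nonneg (mul_nonneg hCτ.le hrd0) hL0,
        mul_nonneg (mul_nonneg hCτ.le hro0) hL0,
        mul_nonneg hCτ.le hro0, mul_nonneg hCτ.le hrd0,
        mul_nonneg hC1.le hro0, mul_nonneg hC1.le hrd0]
    calc |∑ i ∈ Io, u i * ⟪x i - μw, v⟫|
        ≤ |∑ i ∈ Io, u i * ⟪x i - μ, v⟫| + |∑ i ∈ Io, u i * ⟪μ - μw, v⟫| := by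
          rw [hsum]; exact abs_add_le _ _
      _ ≤ Cτ * ((2 + L) * rd + (3/2) * ro) * ‖v‖ + (m:ℝ) * W * (C1 * (ro + rd') * ‖v‖) :=
          add_le_add hA3 hB
      _ = (Cτ * ((2 + L) * rd + (3/2) * ro) + (m:ℝ) * W * (C1 * (ro + rd'))) * ‖v‖ := by
          ring
      _ ≤ (2 * C1 + 2 * Cτ * (2 + L)) * (ro + rd) * ‖v‖ :=
          mul_le_mul_of_nonneg_right key (norm_nonneg _)
  refine main (fun i => w i * hub ((y i - n * w i * ⟪x i - μw, βη⟫) / (lamo * Real.sqrt n)))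
    (fun i => ?_)
  have h1 := (hwb i).1
  have h2 := (hwb i).2
  rw [abs_mul, abs_of_nonneg h1]
  calc w i * |hub ((y i - n * w i * ⟪x i - μw, βη⟫) / (lamo * Real.sqrt n))|
      ≤ W * 1 := mul_le_mul h2 (abs_hub_le_one _) (abs_nonneg _) hW0.le
    _ = W := mul_one W

end
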